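/- Let G be a topological abelian group (written additively) and let F, M ⊆ G satisfy F + M ⊆ F (i.e., x + y ∈ F whenever x ∈ F and y ∈ M). Define the Harvey–Lawson dual F̃ := {x ∈ G : −x ∉ interior F}. Then F̃ + M ⊆ F̃, i.e., the dual F̃ is also M-monotone. -/

import Mathlib

open Pointwise

/-- If `M` is a monotonicity set for `F` (i.e. `F + M ⊆ F`), then the Harvey–Lawson dual
`F̃ = {x | -x ∉ interior F}` is also `M`-monotone: `F̃ + M ⊆ F̃`. -/
theorem hl_dual_monotone {G : Type*} [TopologicalSpace G] [AddCommGroup G]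
    [IsTopologicalAddGroup G] (F M : Set G) (h : F + M ⊆ F) :
    {x : G | -x ∉ interior F} + M ⊆ {x : G | -x ∉ interior F} := by
  rintro z ⟨x, hx, m, hm, rfl⟩
  intro hcon
  apply hx
  have key : (fun y => y + m) '' interior F ⊆ F := by
    rintro _ ⟨y, hy, rfl⟩
    exact h ⟨y, interior_subset hy, m, hm, rfl⟩
  have hopen : IsOpen ((fun y => y + m) '' interior F) :=
    (Homeomorph.addRight m).isOpenMap _ isOpen_interior
  have : -(x + m) + m ∈ interior F :=
    interior_maximal key hopen ⟨-(x + m), hcon, rfl⟩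
  simpa [neg_add, add_assoc] using this
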